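/- Let N ≥ 1, c₀ > 0, and α ∈ [0,1]. Let W^{(1)} = (w^{(1)}_{ab}) and W^{(2)} = (w^{(2)}_{ab}) be N×N real symmetric random matrices with centered, square-integrable entries such that: (i) the pairs {(w^{(1)}_{ab}, w^{(2)}_{ab}) : 1 ≤ a ≤ b ≤ N} form an independent family (i.e. entries attached to distinct index pairs {a,b} are independent, both within each matrix and between the two matrices); (ii) E[(w^{(j)}_{ab})²] ≥ c₀/N for j = 1,2 and all a ≤ b; (iii) |E[w^{(1)}_{ab} w^{(2)}_{ab}]| ≤ (1−α)·(E[(w^{(1)}_{ab})²])^{1/2}·(E[(w^{(2)}_{ab})²])^{1/2} for all a ≤ b. Then for all real symmetric N×N matrices R₁, R₂ one has E[ (Tr(R₁ W^{(1)}) + Tr(R₂ W^{(2)}))² ] ≥ (c₀ α / N) · (Tr(R₁²) + Tr(R₂²)). -/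

import Mathlib

set_option maxHeartbeats 2000000


open MeasureTheory Matrix ProbabilityTheory
open Finset


lemma sym_sum {N : ℕ} (f : Fin N × Fin N → ℝ) (hf : ∀ a b, f (a,b) = f (b,a)) :
    ∑ p : Fin N × Fin N, f p
      = ∑ p : {p : Fin N × Fin N // p.1 ≤ p.2},
          (if (p:Fin N × Fin N).1 = (p:Fin N × Fin N).2 then (1:ℝ) else 2) * f p := by
  classical
  rw [← Finset.sum_filter_add_sum_filter_not Finset.univ (fun p : Fin N × Fin N => p.1 ≤ p.2) f]
  have h2 : ∑ p ∈ univ.filter (fun p : Fin N × Fin N => ¬ p.1 ≤ p.2), f p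
      = ∑ p ∈ univ.filter (fun p : Fin N × Fin N => p.1 < p.2), f p := by
    refine Finset.sum_bij' (fun p _ => Prod.swap p) (fun p _ => Prod.swap p) ?_ ?_ ?_ ?_ ?_
    · intro p hp; simp only [mem_filter, mem_univ, true_and, not_le] at hp ⊢; exact hp
    · intro p hp; simp only [mem_filter, mem_univ, true_and, not_le] at hp ⊢; exact hp
    · intro p _; simp
    · intro p _; simp
    · intro p _; exact hf p.1 p.2
  have h3 : (∑ p : {p : Fin N × Fin N // p.1 ≤ p.2},
      (if (p:Fin N × Fin N).1 = (p:Fin N × Fin N).2 then (1:ℝ) else 2) * f p)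
      = ∑ p ∈ univ.filter (fun p : Fin N × Fin N => p.1 ≤ p.2),
          (if p.1 = p.2 then (1:ℝ) else 2) * f p := by
    rw [← Finset.sum_subtype_eq_sum_filter]
    apply Finset.sum_congr
    · ext p; simp [Finset.mem_subtype]
    · intro p _; rfl
  rw [h2, h3]
  have h4 : ∀ p ∈ univ.filter (fun p : Fin N × Fin N => p.1 ≤ p.2),
      (if p.1 = p.2 then (1:ℝ) else 2) * f p = f p + (if p.1 < p.2 then f p else 0) := by
    intro p hp
    simp only [mem_filter, mem_univ, true_and] at hp
    rcases eq_or_lt_of_le hp with h | h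
    · simp [h, if_neg (lt_irrefl p.2)]
    · rw [if_neg (ne_of_lt h), if_pos h]; ring
  rw [Finset.sum_congr rfl h4, Finset.sum_add_distrib]
  congr 1
  rw [← Finset.sum_filter, Finset.filter_filter]
  exact Finset.sum_congr (Finset.filter_congr (fun p _ => ⟨fun h => ⟨le_of_lt h, h⟩, fun h => h.2⟩)) (fun _ _ => rfl)


lemma per_pair_bound {Ω : Type*} [MeasurableSpace Ω] (μ : Measure Ω) [IsProbabilityMeasure μ]
    (σ α : ℝ) (hσ : 0 < σ) (hα0 : 0 ≤ α) (hα1 : α ≤ 1)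
    (x y : Ω → ℝ) (hx : MemLp x 2 μ) (hy : MemLp y 2 μ)
    (hA : σ ≤ ∫ ω, (x ω)^2 ∂μ) (hC : σ ≤ ∫ ω, (y ω)^2 ∂μ)
    (hB : |∫ ω, x ω * y ω ∂μ| ≤
      (1 - α) * Real.sqrt (∫ ω, (x ω)^2 ∂μ) * Real.sqrt (∫ ω, (y ω)^2 ∂μ))
    (r s c : ℝ) (hc : 1 ≤ c) :
    σ * α * (c * (r^2 + s^2)) ≤ ∫ ω, (c * (r * x ω + s * y ω))^2 ∂μ := by
  have Ix := hx.integrable_sq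
  have Iy := hy.integrable_sq
  have Ixy : Integrable (fun ω => x ω * y ω) μ := by
    have h := (((hx.add hy).integrable_sq.sub Ix).sub Iy).const_mul (1/2 : ℝ)
    refine h.congr (Filter.Eventually.of_forall (fun ω => ?_))
    simp only [Pi.sub_apply, Pi.add_apply]
    ring
  have expand : ∫ ω, (c * (r * x ω + s * y ω))^2 ∂μ
      = c^2*r^2 * (∫ ω, (x ω)^2 ∂μ) + c^2*s^2 * (∫ ω, (y ω)^2 ∂μ)
        + (2*c^2*r*s) * (∫ ω, x ω * y ω ∂μ) := by
    have e : ∀ ω, (c * (r * x ω + s * y ω))^2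
        = c^2*r^2*(x ω)^2 + (c^2*s^2*(y ω)^2 + (2*c^2*r*s)*(x ω * y ω)) := fun ω => by ring
    simp_rw [e]
    have I1 : Integrable (fun ω => c^2*r^2*(x ω)^2) μ := Ix.const_mul _
    have I2 : Integrable (fun ω => c^2*s^2*(y ω)^2 + (2*c^2*r*s)*(x ω * y ω)) μ :=
      (Iy.const_mul _).add (Ixy.const_mul _)
    have I3 : Integrable (fun ω => c^2*s^2*(y ω)^2) μ := Iy.const_mul _
    have I4 : Integrable (fun ω => (2*c^2*r*s)*(x ω * y ω)) μ := Ixy.const_mul _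
    rw [integral_add I1 I2, integral_add I3 I4,
      integral_const_mul, integral_const_mul, integral_const_mul]
    ring
  set A := ∫ ω, (x ω)^2 ∂μ with hAdef
  set C := ∫ ω, (y ω)^2 ∂μ with hCdef
  set B := ∫ ω, x ω * y ω ∂μ with hBdef
  have hA0 : (0:ℝ) ≤ A := le_trans hσ.le hA
  have hC0 : (0:ℝ) ≤ C := le_trans hσ.le hC
  have sqA : Real.sqrt A ^ 2 = A := Real.sq_sqrt hA0
  have sqC : Real.sqrt C ^ 2 = C := Real.sq_sqrt hC0
  have h1 : -(|r| * |s| * |B|) ≤ r * s * B := by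
    have h := neg_abs_le (r * s * B)
    rwa [abs_mul, abs_mul] at h
  have h2 : |r| * |s| * |B| ≤ |r| * |s| * ((1-α) * Real.sqrt A * Real.sqrt C) :=
    mul_le_mul_of_nonneg_left hB (by positivity)
  have hint : 2 * ((1-α) * (|r| * Real.sqrt A) * (|s| * Real.sqrt C))
      ≤ (1-α) * (r^2*A) + (1-α) * (s^2*C) := by
    have hsq := sq_nonneg (|r| * Real.sqrt A - |s| * Real.sqrt C)
    have h3 : (|r| * Real.sqrt A)^2 = r^2*A := by rw [mul_pow, sq_abs, sqA]
    have h4 : (|s| * Real.sqrt C)^2 = s^2*C := by rw [mul_pow, sq_abs, sqC]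
    nlinarith [mul_nonneg (sub_nonneg.2 hα1) hsq]
  have key : α * (r^2*A + s^2*C) ≤ r^2*A + s^2*C + 2*(r*s*B) := by nlinarith [h1, h2, hint]
  have s1 : α * (σ * (r^2 + s^2)) ≤ α * (r^2*A + s^2*C) := by
    nlinarith [mul_nonneg hα0 (mul_nonneg (sq_nonneg r) (sub_nonneg.2 hA)),
      mul_nonneg hα0 (mul_nonneg (sq_nonneg s) (sub_nonneg.2 hC))]
  have hc2 : c ≤ c^2 := by nlinarith
  have base : 0 ≤ α * (σ * (r^2 + s^2)) :=
    mul_nonneg hα0 (mul_nonneg hσ.le (by positivity))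
  rw [expand]
  nlinarith [mul_le_mul_of_nonneg_left (s1.trans key) (sq_nonneg c),
    mul_le_mul_of_nonneg_right hc2 base]



/-- Quantitative lower bound on the joint covariance tensor of a coupled pair of
Wigner-type matrices: with variances at least `c₀/N` and decorrelation parameter `α`,
`E[(Tr(R₁W⁽¹⁾) + Tr(R₂W⁽²⁾))²] ≥ (c₀α/N)(Tr R₁² + Tr R₂²)` for all symmetric `R₁, R₂`.
This is the operator bound `Σ^{(1,2)} ≳ α/N` replacing the fullness condition. -/
theorem joint_covariance_tensor_lower_bound
    {Ω : Type*} [MeasurableSpace Ω] (μ : Measure Ω) [IsProbabilityMeasure μ]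
    (N : ℕ) (hN : 1 ≤ N) (c₀ α : ℝ) (hc₀ : 0 < c₀) (hα : α ∈ Set.Icc (0:ℝ) 1)
    (W₁ W₂ : Ω → Matrix (Fin N) (Fin N) ℝ)
    (hsymm₁ : ∀ ω, (W₁ ω).IsSymm) (hsymm₂ : ∀ ω, (W₂ ω).IsSymm)
    (hL2₁ : ∀ a b, MemLp (fun ω => W₁ ω a b) 2 μ)
    (hL2₂ : ∀ a b, MemLp (fun ω => W₂ ω a b) 2 μ)
    (hmean₁ : ∀ a b, ∫ ω, W₁ ω a b ∂μ = 0)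
    (hmean₂ : ∀ a b, ∫ ω, W₂ ω a b ∂μ = 0)
    (hindep : iIndepFun
      (fun p : {p : Fin N × Fin N // p.1 ≤ p.2} =>
        fun ω => (W₁ ω p.1.1 p.1.2, W₂ ω p.1.1 p.1.2)) μ)
    (hvar₁ : ∀ a b : Fin N, a ≤ b → c₀ / N ≤ ∫ ω, (W₁ ω a b)^2 ∂μ)
    (hvar₂ : ∀ a b : Fin N, a ≤ b → c₀ / N ≤ ∫ ω, (W₂ ω a b)^2 ∂μ)
    (hdecorr : ∀ a b : Fin N, a ≤ b →
      |∫ ω, W₁ ω a b * W₂ ω a b ∂μ| ≤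
        (1 - α) * Real.sqrt (∫ ω, (W₁ ω a b)^2 ∂μ) * Real.sqrt (∫ ω, (W₂ ω a b)^2 ∂μ)) :
    ∀ R₁ R₂ : Matrix (Fin N) (Fin N) ℝ, R₁.IsSymm → R₂.IsSymm →
      (c₀ * α / N) * ((R₁ * R₁).trace + (R₂ * R₂).trace) ≤
        ∫ ω, ((R₁ * W₁ ω).trace + (R₂ * W₂ ω).trace)^2 ∂μ := by
  classical
  intro R₁ R₂ hR₁ hR₂
  have hNpos : (0:ℝ) < N := by exact_mod_cast Nat.lt_of_lt_of_le Nat.zero_lt_one hN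
  have hσ : (0:ℝ) < c₀ / N := div_pos hc₀ hNpos
  set S := {p : Fin N × Fin N // p.1 ≤ p.2}
  set Y : S → Ω → ℝ := fun p ω =>
    (if p.1.1 = p.1.2 then (1:ℝ) else 2) *
      (R₁ p.1.1 p.1.2 * W₁ ω p.1.1 p.1.2 + R₂ p.1.1 p.1.2 * W₂ ω p.1.1 p.1.2) with hYdef
  -- trace as a sum over all index pairs
  have htrace : ∀ (M W : Matrix (Fin N) (Fin N) ℝ),
      (M * W).trace = ∑ p : Fin N × Fin N, M p.1 p.2 * W p.2 p.1 := by
    intro M W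
    simp [Matrix.trace, Matrix.mul_apply, Fintype.sum_prod_type, Finset.mul_sum]
  -- pointwise identity
  have hXeq : ∀ ω, (R₁ * W₁ ω).trace + (R₂ * W₂ ω).trace = ∑ p : S, Y p ω := by
    intro ω
    have h := sym_sum
      (fun q : Fin N × Fin N => R₁ q.1 q.2 * W₁ ω q.1 q.2 + R₂ q.1 q.2 * W₂ ω q.1 q.2)
      (fun a b => by
        simp only [hR₁.apply a b, hR₂.apply a b, (hsymm₁ ω).apply a b, (hsymm₂ ω).apply a b])
    rw [htrace, htrace, ← Finset.sum_add_distrib]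
    rw [show (∑ p : Fin N × Fin N,
        (R₁ p.1 p.2 * W₁ ω p.2 p.1 + R₂ p.1 p.2 * W₂ ω p.2 p.1))
        = ∑ p : Fin N × Fin N,
        (R₁ p.1 p.2 * W₁ ω p.1 p.2 + R₂ p.1 p.2 * W₂ ω p.1 p.2) from
      Finset.sum_congr rfl (fun p _ => by rw [(hsymm₁ ω).apply, (hsymm₂ ω).apply])]
    exact h
  -- trace of squares
  have htr2 : (R₁ * R₁).trace + (R₂ * R₂).trace
      = ∑ p : S, (if p.1.1 = p.1.2 then (1:ℝ) else 2) *
          ((R₁ p.1.1 p.1.2)^2 + (R₂ p.1.1 p.1.2)^2) := by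
    have h := sym_sum
      (fun q : Fin N × Fin N => (R₁ q.1 q.2)^2 + (R₂ q.1 q.2)^2)
      (fun a b => by simp only [hR₁.apply a b, hR₂.apply a b])
    rw [htrace, htrace, ← Finset.sum_add_distrib]
    rw [show (∑ p : Fin N × Fin N, (R₁ p.1 p.2 * R₁ p.2 p.1 + R₂ p.1 p.2 * R₂ p.2 p.1))
        = ∑ p : Fin N × Fin N, ((R₁ p.1 p.2)^2 + (R₂ p.1 p.2)^2) from
      Finset.sum_congr rfl (fun p _ => by rw [hR₁.apply, hR₂.apply]; ring)]
    exact h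
  -- MemLp of each Y p
  have hYmem : ∀ p : S, MemLp (Y p) 2 μ := fun p =>
    (((hL2₁ p.1.1 p.1.2).const_mul _).add ((hL2₂ p.1.1 p.1.2).const_mul _)).const_mul _
  -- mean zero
  have hYmean : ∀ p : S, ∫ ω, Y p ω ∂μ = 0 := by
    intro p
    rw [hYdef]
    simp only
    rw [integral_const_mul, integral_add (((hL2₁ p.1.1 p.1.2).integrable one_le_two).const_mul _)
      (((hL2₂ p.1.1 p.1.2).integrable one_le_two).const_mul _),
      integral_const_mul, integral_const_mul, hmean₁, hmean₂]
    ring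
  -- independence
  have hYindep : ∀ p q : S, p ≠ q → IndepFun (Y p) (Y q) μ := by
    intro p q hpq
    have hcomp := hindep.comp
      (fun p : S => fun z : ℝ × ℝ =>
        (if p.1.1 = p.1.2 then (1:ℝ) else 2) *
          (R₁ p.1.1 p.1.2 * z.1 + R₂ p.1.1 p.1.2 * z.2))
      (fun p => by fun_prop)
    exact hcomp.indepFun hpq
  -- variance sum
  have hXfun : (fun ω => ∑ p : S, Y p ω) = ∑ p : S, Y p := by
    funext ω; simp [Finset.sum_apply]
  have hXmem : MemLp (fun ω => ∑ p : S, Y p ω) 2 μ := by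
    rw [hXfun]; exact memLp_finset_sum' _ (fun p _ => hYmem p)
  have hsum_mean : ∫ ω, (∑ p : S, Y p ω) ∂μ = 0 := by
    rw [integral_finset_sum _ (fun p _ => (hYmem p).integrable one_le_two)]
    exact Finset.sum_eq_zero (fun p _ => hYmean p)
  have hvar : variance (fun ω => ∑ p : S, Y p ω) μ = ∑ p : S, variance (Y p) μ := by
    rw [hXfun]
    exact IndepFun.variance_sum (fun p _ => hYmem p)
      (fun p _ q _ hpq => hYindep p q hpq)
  have h2 : ∫ ω, (∑ p : S, Y p ω)^2 ∂μ = ∑ p : S, variance (Y p) μ := by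
    have hv := variance_eq_sub hXmem
    simp only [Pi.pow_apply] at hv
    rw [← hvar, hv, hsum_mean]
    ring
  -- per-pair bound
  have hbound : ∀ p : S, (c₀ / N) * α *
      ((if p.1.1 = p.1.2 then (1:ℝ) else 2) * ((R₁ p.1.1 p.1.2)^2 + (R₂ p.1.1 p.1.2)^2))
      ≤ variance (Y p) μ := by
    intro p
    have hv := variance_eq_sub (hYmem p)
    simp only [Pi.pow_apply] at hv
    rw [hv, hYmean p]
    have hb := per_pair_bound μ (c₀ / N) α hσ hα.1 hα.2
      (fun ω => W₁ ω p.1.1 p.1.2) (fun ω => W₂ ω p.1.1 p.1.2)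
      (hL2₁ p.1.1 p.1.2) (hL2₂ p.1.1 p.1.2)
      (hvar₁ p.1.1 p.1.2 p.2) (hvar₂ p.1.1 p.1.2 p.2)
      (hdecorr p.1.1 p.1.2 p.2)
      (R₁ p.1.1 p.1.2) (R₂ p.1.1 p.1.2) (if p.1.1 = p.1.2 then (1:ℝ) else 2)
      (by split_ifs <;> norm_num)
    calc (c₀ / N) * α * _ ≤ ∫ ω, ((if p.1.1 = p.1.2 then (1:ℝ) else 2) *
          (R₁ p.1.1 p.1.2 * W₁ ω p.1.1 p.1.2 + R₂ p.1.1 p.1.2 * W₂ ω p.1.1 p.1.2))^2 ∂μ := hb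
      _ = ∫ ω, Y p ω ^ 2 ∂μ := rfl
      _ = ∫ ω, Y p ω ^ 2 ∂μ - 0 ^ 2 := by ring
  -- assemble
  calc (c₀ * α / N) * ((R₁ * R₁).trace + (R₂ * R₂).trace)
      = ∑ p : S, (c₀ / N) * α *
          ((if p.1.1 = p.1.2 then (1:ℝ) else 2) *
            ((R₁ p.1.1 p.1.2)^2 + (R₂ p.1.1 p.1.2)^2)) := by
        rw [htr2, Finset.mul_sum]
        exact Finset.sum_congr rfl (fun p _ => by ring)
    _ ≤ ∑ p : S, variance (Y p) μ := Finset.sum_le_sum (fun p _ => hbound p)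
    _ = ∫ ω, (∑ p : S, Y p ω)^2 ∂μ := h2.symm
    _ = ∫ ω, ((R₁ * W₁ ω).trace + (R₂ * W₂ ω).trace)^2 ∂μ := by
        congr 1
        funext ω
        rw [hXeq ω]
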